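/- Let $a > 0$ and define $g_1(x) = (x - a x^3)\sin(x) + 2(\cos(x) - 1)$ and $g_2(x) = (x - a x^3)(\cos(x) + 1) - 2\sin(x)$. If $1 - 4\pi^2 a < 0$, then there exists a unique $x_* \in (\pi, 2\pi)$ such that $g_1(x_*) = 0$ and $g_2(x_*) = 0$. -/

import Mathlib

open Real Set

theorem stmt_1 (a : ℝ) (ha : 0 < a)
    (g₁ g₂ : ℝ → ℝ)
    (hg₁ : ∀ x, g₁ x = (x - a * x ^ 3) * Real.sin x + 2 * (Real.cos x - 1))
    (hg₂ : ∀ x, g₂ x = (x - a * x ^ 3) * (Real.cos x + 1) - 2 * Real.sin x)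
    (h : 1 - 4 * π ^ 2 * a < 0) :
    ∃! x : ℝ, x ∈ Ioo π (2 * π) ∧ g₁ x = 0 ∧ g₂ x = 0 := by
  have hπ := Real.pi_pos
  set ψ : ℝ → ℝ := fun x => x - a * x ^ 3 - 2 * Real.tan (x / 2) with hψdef
  -- cos (x/2) < 0 on (π, 2π]
  have hc : ∀ x : ℝ, π < x → x ≤ 2 * π → Real.cos (x / 2) < 0 := by
    intro x h1 h2
    apply Real.cos_neg_of_pi_div_two_lt_of_lt <;> nlinarith
  -- key equivalence
  have key : ∀ x ∈ Ioo π (2 * π), ((g₁ x = 0 ∧ g₂ x = 0) ↔ ψ x = 0) := by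
    intro x hx
    have hcx : Real.cos (x / 2) < 0 := hc x hx.1 hx.2.le
    have hcx' : Real.cos (x / 2) ≠ 0 := ne_of_lt hcx
    have hcos : Real.cos x = 2 * Real.cos (x / 2) ^ 2 - 1 := by
      have := Real.cos_two_mul (x / 2)
      rw [show 2 * (x / 2) = x by ring] at this
      linarith
    have hsin : Real.sin x = 2 * Real.sin (x / 2) * Real.cos (x / 2) := by
      have := Real.sin_two_mul (x / 2)
      rw [show 2 * (x / 2) = x by ring] at this
      linarith
    have hs2 : Real.sin (x / 2) ^ 2 = 1 - Real.cos (x / 2) ^ 2 := by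
      nlinarith [Real.sin_sq_add_cos_sq (x / 2)]
    have htan : Real.tan (x / 2) = Real.sin (x / 2) / Real.cos (x / 2) :=
      Real.tan_eq_sin_div_cos _
    rw [hg₁, hg₂, hψdef]
    simp only
    rw [htan, hcos, hsin]
    constructor
    · rintro ⟨-, h2⟩
      have : (x - a * x ^ 3) * Real.cos (x / 2) = 2 * Real.sin (x / 2) := by
        have hc2 : 0 < Real.cos (x / 2) ^ 2 := by nlinarith [hcx]
        nlinarith [h2]
      field_simp
      linarith [this]
    · intro hz
      have hxe : x - a * x ^ 3 = 2 * Real.sin (x / 2) / Real.cos (x / 2) := by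
        field_simp at hz ⊢
        linarith [hz]
      rw [hxe]
      constructor
      · field_simp
        nlinarith [hs2]
      · field_simp
        ring_nf
  -- strict antitone
  have hanti : StrictAntiOn ψ (Ioo π (2 * π)) := by
    have hderiv : ∀ x ∈ Ioo π (2 * π),
        HasDerivAt ψ (1 - a * (3 * x ^ 2) - 1 / Real.cos (x / 2) ^ 2 * (1 / 2) * 2) x := by
      intro x hx
      have hcx' : Real.cos (x / 2) ≠ 0 := ne_of_lt (hc x hx.1 hx.2.le)
      have ht : HasDerivAt (fun y : ℝ => Real.tan (y / 2))
          (1 / Real.cos (x / 2) ^ 2 * (1 / 2)) x := by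
        have := (Real.hasDerivAt_tan hcx').comp x ((hasDerivAt_id x).div_const 2)
        simpa [Function.comp_def] using this
      have h1 : HasDerivAt (fun y : ℝ => y - a * y ^ 3) (1 - a * (3 * x ^ 2)) x := by
        have := (hasDerivAt_id x).sub ((hasDerivAt_pow 3 x).const_mul a)
        simpa [Pi.sub_def] using this
      have := h1.sub (ht.const_mul 2)
      exact this.congr_deriv (by ring)
    have hcont : ContinuousOn ψ (Ioo π (2 * π)) := fun x hx =>
      ((hderiv x hx).continuousAt).continuousWithinAt
    refine strictAntiOn_of_deriv_neg (convex_Ioo _ _) hcont ?_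
    intro x hx
    rw [interior_Ioo] at hx
    rw [(hderiv x hx).deriv]
    have hcx : Real.cos (x / 2) < 0 := hc x hx.1 hx.2.le
    have hc2 : 0 < Real.cos (x / 2) ^ 2 := by nlinarith [hcx]
    have hc1 : Real.cos (x / 2) ^ 2 ≤ 1 := by
      nlinarith [Real.sin_sq_add_cos_sq (x / 2), sq_nonneg (Real.sin (x / 2))]
    have hinv : 1 ≤ 1 / Real.cos (x / 2) ^ 2 := by
      rw [le_div_iff₀ hc2]; linarith
    nlinarith [sq_nonneg x, hx.1, hπ]
  -- existence: ψ → atTop as x → π⁺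
  have htop : Filter.Tendsto ψ (nhdsWithin π (Ioi π)) Filter.atTop := by
    have h2a : Filter.Tendsto (fun y : ℝ => y - π) (nhdsWithin (π / 2) (Ioi (π / 2)))
        (nhdsWithin (-(π / 2)) (Ioi (-(π / 2)))) := by
      rw [tendsto_nhdsWithin_iff]
      constructor
      · have : Filter.Tendsto (fun y : ℝ => y - π) (nhds (π / 2)) (nhds (π / 2 - π)) :=
          (continuous_id.sub continuous_const).tendsto _
        rw [show π / 2 - π = -(π / 2) by ring] at this
        exact this.mono_left nhdsWithin_le_nhds
      · filter_upwards [self_mem_nhdsWithin] with y hy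
        simp only [mem_Ioi] at hy ⊢
        linarith
    have h2b : Filter.Tendsto Real.tan (nhdsWithin (π / 2) (Ioi (π / 2))) Filter.atBot := by
      have := Real.tendsto_tan_neg_pi_div_two.comp h2a
      refine this.congr fun y => ?_
      simp [Real.tan_sub_pi]
    have h2c : Filter.Tendsto (fun x : ℝ => x / 2) (nhdsWithin π (Ioi π))
        (nhdsWithin (π / 2) (Ioi (π / 2))) := by
      rw [tendsto_nhdsWithin_iff]
      constructor
      · exact ((continuous_id.div_const 2).tendsto π).mono_left nhdsWithin_le_nhds
      · filter_upwards [self_mem_nhdsWithin] with y hy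
        simp only [mem_Ioi] at hy ⊢
        linarith
    have h2 : Filter.Tendsto (fun x : ℝ => -2 * Real.tan (x / 2)) (nhdsWithin π (Ioi π))
        Filter.atTop := by
      exact Filter.Tendsto.const_mul_atBot_of_neg (by norm_num) (h2b.comp h2c)
    have h1 : Filter.Tendsto (fun x : ℝ => x - a * x ^ 3) (nhdsWithin π (Ioi π))
        (nhds (π - a * π ^ 3)) := by
      exact ((continuous_id.sub (continuous_const.mul (continuous_pow 3))).tendsto π).mono_left
        nhdsWithin_le_nhds
    have := h1.add_atTop h2
    refine this.congr fun x => ?_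
    simp only [hψdef]; ring
  -- find b with ψ b > 0
  have hπ2 : π < 2 * π := by linarith
  have hev : ∀ᶠ x in nhdsWithin π (Ioi π), x ∈ Ioo π (2 * π) :=
    Ioo_mem_nhdsGT_of_mem ⟨le_refl π, hπ2⟩
  obtain ⟨b, hbpos, hbmem⟩ := ((htop.eventually_gt_atTop 0).and hev).exists
  -- ψ (2π) < 0
  have hψ2π : ψ (2 * π) < 0 := by
    simp only [hψdef]
    rw [show 2 * π / 2 = π by ring, Real.tan_pi]
    nlinarith
  -- continuity on [b, 2π]
  have hcontIcc : ContinuousOn ψ (Icc b (2 * π)) := by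
    intro x hx
    have hx1 : π < x := lt_of_lt_of_le hbmem.1 hx.1
    have hcx' : Real.cos (x / 2) ≠ 0 := ne_of_lt (hc x hx1 hx.2)
    have h1 : ContinuousAt (fun y : ℝ => Real.tan (y / 2)) x := by
      show ContinuousAt (Real.tan ∘ fun y : ℝ => y / 2) x
      exact ContinuousAt.comp (Real.continuousAt_tan.2 hcx') (by fun_prop)
    exact (((continuous_id.sub (continuous_const.mul (continuous_pow 3))).continuousAt).sub
      (h1.const_mul 2)).continuousWithinAt
  -- IVT
  have hble : b ≤ 2 * π := hbmem.2.le
  have h0mem : (0 : ℝ) ∈ Ioo (ψ (2 * π)) (ψ b) := ⟨hψ2π, hbpos⟩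
  obtain ⟨x₀, hx₀mem', hψx₀⟩ := intermediate_value_Ioo' hble hcontIcc h0mem
  have hx₀mem : x₀ ∈ Ioo π (2 * π) := ⟨lt_trans hbmem.1 hx₀mem'.1, hx₀mem'.2⟩
  refine ⟨x₀, ⟨hx₀mem, (key x₀ hx₀mem).2 hψx₀⟩, ?_⟩
  rintro y ⟨hymem, hy⟩
  have hψy : ψ y = 0 := (key y hymem).1 hy
  exact hanti.injOn hymem hx₀mem (by rw [hψy, hψx₀])
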